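/- Let p be an idempotent abstract τ-multi-polynomial (p ∘̂ p = p over the Boolean semiring). Then p[1/τ], the result of substituting 1 for τ (and re-flattening coefficients to {0,1}), is also idempotent; moreover, if p is neat (dependency graph minus self-loops is a DAG respecting the index order, and no p[i] has a monomial divisible by xᵢ other than xᵢ), then p[1/τ] is neat. -/

import Mathlib

open MvPolynomial

/-- Variable set for τ-polynomials: `n` program variables plus the extra variable τ. -/
abbrev Vn (n : ℕ) := Fin n ⊕ Unit

/-- The abstraction map `α`: replace every nonzero coefficient by `1`
(computation over the Boolean semiring). -/
noncomputable def absP {σ : Type*} (p : MvPolynomial σ ℕ) : MvPolynomial σ ℕ :=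
  ∑ m ∈ p.support, monomial m 1

/-- Abstract composition of abstract τ-multi-polynomials: substitute the
components of `q` for `x₁,…,xₙ` in `p` (leaving τ fixed), flattening
coefficients back to `{0,1}`. -/
noncomputable def acompT {n : ℕ} (p q : Fin n → MvPolynomial (Vn n) ℕ) :
    Fin n → MvPolynomial (Vn n) ℕ :=
  fun i => absP (bind₁ (Sum.elim q (fun _ => X (Sum.inr ()))) (p i))

/-- `p[1/τ]`: substitute 1 for τ (and re-flatten coefficients to `{0,1}`). -/
noncomputable def sub1 {n : ℕ} (p : Fin n → MvPolynomial (Vn n) ℕ) :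
    Fin n → MvPolynomial (Fin n) ℕ :=
  fun i => absP (aeval (Sum.elim X (fun _ => 1)) (p i))

/-- Abstract composition of τ-free abstract multi-polynomials. -/
noncomputable def acomp1 {n : ℕ} (p q : Fin n → MvPolynomial (Fin n) ℕ) :
    Fin n → MvPolynomial (Fin n) ℕ :=
  fun i => absP (bind₁ q (p i))

/-! ### Auxiliary: the Boolean semiring -/

inductive B2 : Type
  | zero
  | one
deriving DecidableEq

instance : Fintype B2 := Fintype.ofList [B2.zero, B2.one] (fun x => by cases x <;> simp)

instance : Zero B2 := ⟨.zero⟩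
instance : One B2 := ⟨.one⟩
instance : Add B2 := ⟨fun a b => match a, b with | .zero, .zero => .zero | _, _ => .one⟩
instance : Mul B2 := ⟨fun a b => match a, b with | .one, .one => .one | _, _ => .zero⟩

instance : CommSemiring B2 where
  add_assoc := by decide
  zero_add := by decide
  add_zero := by decide
  add_comm := by decide
  mul_assoc := by decide
  one_mul := by decide
  mul_one := by decide
  zero_mul := by decide
  mul_zero := by decide
  left_distrib := by decide
  right_distrib := by decide
  mul_comm := by decide
  nsmul := nsmulRec

noncomputable def cB : ℕ →+* B2 := Nat.castRingHom B2

lemma cB_eq_zero_iff (k : ℕ) : cB k = 0 ↔ k = 0 := by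
  constructor
  · intro h
    by_contra hk
    obtain ⟨j, rfl⟩ := Nat.exists_eq_succ_of_ne_zero hk
    have h2 : cB (j + 1) = cB j + 1 := by simp [cB]
    rw [h2] at h
    have h1 : ∀ x : B2, x + 1 = 1 := by decide
    rw [h1] at h
    exact (by decide : (1 : B2) ≠ 0) h
  · rintro rfl; simp [cB]

lemma cB_of_ne_zero {k : ℕ} (hk : k ≠ 0) : cB k = 1 := by
  have h0 : cB k ≠ 0 := fun h => hk ((cB_eq_zero_iff k).1 h)
  cases h : cB k
  · exact absurd h h0
  · rfl

/-! ### Auxiliary lemmas about `absP` -/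

open scoped Classical in
lemma coeff_absP {σ : Type*} (q : MvPolynomial σ ℕ) (m : σ →₀ ℕ) :
    (absP q).coeff m = if m ∈ q.support then 1 else 0 := by
  rw [absP, coeff_sum]
  simp [coeff_monomial]

lemma support_absP {σ : Type*} (q : MvPolynomial σ ℕ) : (absP q).support = q.support := by
  classical
  ext m
  rw [mem_support_iff, coeff_absP]
  split_ifs with h
  · simpa using h
  · simpa using h

lemma absP_congr {σ : Type*} {a b : MvPolynomial σ ℕ} (h : a.support = b.support) :
    absP a = absP b := by
  unfold absP; rw [h]

lemma absP_idem {σ : Type*} (q : MvPolynomial σ ℕ) : absP (absP q) = absP q :=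
  absP_congr (support_absP q)

lemma map_cB_absP {σ : Type*} (q : MvPolynomial σ ℕ) : map cB (absP q) = map cB q := by
  classical
  ext m
  rw [coeff_map, coeff_map, coeff_absP]
  split_ifs with h
  · rw [mem_support_iff] at h
    rw [map_one, cB_of_ne_zero h]
  · rw [mem_support_iff, not_not] at h
    simp [h]

lemma support_map_cB {σ : Type*} (q : MvPolynomial σ ℕ) : (map cB q).support = q.support := by
  ext m
  simp only [mem_support_iff, coeff_map, ne_eq]
  rw [cB_eq_zero_iff]

/-! ### Restriction of exponent vectors -/

noncomputable def rres {n : ℕ} (m : Vn n →₀ ℕ) : Fin n →₀ ℕ :=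
  Finsupp.comapDomain Sum.inl m Sum.inl_injective.injOn

lemma rres_apply {n : ℕ} (m : Vn n →₀ ℕ) (j : Fin n) : rres m j = m (Sum.inl j) := rfl

lemma rres_add {n : ℕ} (m₁ m₂ : Vn n →₀ ℕ) : rres (m₁ + m₂) = rres m₁ + rres m₂ :=
  Finsupp.comapDomain_add_of_injective Sum.inl_injective m₁ m₂

lemma rres_single_inl {n : ℕ} (j : Fin n) (e : ℕ) :
    rres (Finsupp.single (Sum.inl j) e) = Finsupp.single j e := by
  classical
  ext k
  simp [rres_apply, Finsupp.single_apply, Sum.inl.injEq]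

lemma rres_single_inr {n : ℕ} (u : Unit) (e : ℕ) :
    rres (Finsupp.single (Sum.inr u : Vn n) e) = 0 := by
  classical
  ext k
  simp [rres_apply, Finsupp.single_apply]


/-! ### Named evaluation homomorphisms -/

noncomputable def AN (n : ℕ) : MvPolynomial (Vn n) ℕ →ₐ[ℕ] MvPolynomial (Fin n) ℕ :=
  aeval (Sum.elim X (fun _ => 1))

noncomputable def AB (n : ℕ) : MvPolynomial (Vn n) ℕ →ₐ[ℕ] MvPolynomial (Fin n) B2 :=
  aeval (Sum.elim X (fun _ => 1))

noncomputable def ABB (n : ℕ) : MvPolynomial (Vn n) B2 →ₐ[B2] MvPolynomial (Fin n) B2 :=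
  aeval (Sum.elim X (fun _ => 1))

noncomputable def DB {n : ℕ} (P : Fin n → MvPolynomial (Fin n) B2) :
    MvPolynomial (Vn n) ℕ →ₐ[ℕ] MvPolynomial (Fin n) B2 :=
  aeval (Sum.elim P (fun _ => 1))

lemma sub1_AN {n : ℕ} (p : Fin n → MvPolynomial (Vn n) ℕ) (i : Fin n) :
    sub1 p i = absP (AN n (p i)) := rfl

/-! ### The evaluation at τ = 1 on monomials and supports -/

lemma aeval_AN_monomial {n : ℕ} (m : Vn n →₀ ℕ) (a : ℕ) :
    AN n (monomial m a) = monomial (rres m) a := by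
  classical
  rw [AN, aeval_monomial]
  have hprod : (m.prod fun v e => (Sum.elim X (fun _ => 1) : Vn n → MvPolynomial (Fin n) ℕ) v ^ e)
      = monomial (rres m) 1 := by
    induction m using Finsupp.induction with
    | zero =>
        have h0 : rres (0 : Vn n →₀ ℕ) = 0 := by ext k; simp [rres_apply]
        simp [h0, monomial_zero']
    | single_add v e f hv he ih =>
        rw [Finsupp.prod_add_index' (fun _ => pow_zero _) (fun _ _ _ => pow_add _ _ _), ih,
          rres_add]
        have hsingle : ((Finsupp.single v e).prod fun w d =>
            (Sum.elim X (fun _ => 1) : Vn n → MvPolynomial (Fin n) ℕ) w ^ d)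
            = (Sum.elim X (fun _ => 1) : Vn n → MvPolynomial (Fin n) ℕ) v ^ e :=
          Finsupp.prod_single_index (pow_zero _)
        rw [hsingle]
        cases v with
        | inl j =>
            rw [rres_single_inl]
            rw [Sum.elim_inl, X_pow_eq_monomial, monomial_mul, mul_one]
        | inr u =>
            rw [rres_single_inr, zero_add, Sum.elim_inr, one_pow, one_mul]
  rw [hprod]
  have halg : (algebraMap ℕ (MvPolynomial (Fin n) ℕ)) = (C : ℕ →+* MvPolynomial (Fin n) ℕ) :=
    Subsingleton.elim _ _
  rw [halg, C_mul_monomial, mul_one]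

lemma support_AN {n : ℕ} (q : MvPolynomial (Vn n) ℕ) :
    (AN n q).support ⊆ q.support.image rres := by
  classical
  conv_lhs => rw [q.as_sum, map_sum]
  refine support_sum.trans ?_
  intro m hm
  rw [Finset.mem_biUnion] at hm
  obtain ⟨m', hm', hmem⟩ := hm
  rw [aeval_AN_monomial] at hmem
  have hsub := support_monomial_subset hmem
  rw [Finset.mem_singleton] at hsub
  subst hsub
  exact Finset.mem_image_of_mem _ hm'

/-! ### Composition identities over the Boolean semiring -/

lemma congr_mapcB_AN {n : ℕ} (q : MvPolynomial (Vn n) ℕ) :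
    map cB (AN n q) = AB n q := by
  have h : ((map cB : MvPolynomial (Fin n) ℕ →+* MvPolynomial (Fin n) B2).comp
        (AN n).toRingHom) = (AB n).toRingHom := by
    apply ringHom_ext' (Subsingleton.elim _ _)
    rintro (j | u) <;> simp [AN, AB]
  exact RingHom.congr_fun h q

lemma congr_AB_map {n : ℕ} (q : MvPolynomial (Vn n) ℕ) :
    AB n q = ABB n (map cB q) := by
  have h : (AB n).toRingHom = ((ABB n).toRingHom.comp
      (map cB : MvPolynomial (Vn n) ℕ →+* MvPolynomial (Vn n) B2)) := by
    apply ringHom_ext' (Subsingleton.elim _ _)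
    rintro (j | u) <;> simp [AB, ABB]
  exact RingHom.congr_fun h q

lemma AB_absP {n : ℕ} (q : MvPolynomial (Vn n) ℕ) : AB n (absP q) = AB n q := by
  rw [congr_AB_map (absP q), map_cB_absP, ← congr_AB_map]

lemma congr_AB_bind {n : ℕ} (p : Fin n → MvPolynomial (Vn n) ℕ)
    (q : MvPolynomial (Vn n) ℕ) :
    AB n (bind₁ (Sum.elim p (fun _ => X (Sum.inr ()))) q)
      = DB (fun j => AB n (p j)) q := by
  have h : ((AB n).toRingHom.comp (bind₁ (Sum.elim p (fun _ => X (Sum.inr ())))).toRingHom)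
      = (DB (fun j => AB n (p j))).toRingHom := by
    apply ringHom_ext' (Subsingleton.elim _ _)
    rintro (j | u) <;> simp [AB, DB, bind₁_X_right]
  exact RingHom.congr_fun h q

lemma congr_bind_AB {n : ℕ} (P : Fin n → MvPolynomial (Fin n) B2)
    (q : MvPolynomial (Vn n) ℕ) :
    bind₁ P (AB n q) = DB P q := by
  have h : ((bind₁ P).toRingHom.comp (AB n).toRingHom) = (DB P).toRingHom := by
    apply ringHom_ext' (Subsingleton.elim _ _)
    rintro (j | u) <;> simp [AB, DB, bind₁_X_right]
  exact RingHom.congr_fun h q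

/-! ### Main theorem -/

/-- If the abstract τ-multi-polynomial `p` (all coefficients 0/1) is idempotent
under abstract composition, then so is `p[1/τ]`; moreover, if `p` is neat
(dependency graph minus self-loops is a DAG respecting the index order, and no
`p[i]` has a monomial divisible by `xᵢ` other than `xᵢ`), then `p[1/τ]` is neat. -/
theorem stmt19 {n : ℕ} (p : Fin n → MvPolynomial (Vn n) ℕ)
    (habs : ∀ i m, (p i).coeff m ≤ 1)
    (hidem : acompT p p = p) :
    acomp1 (sub1 p) (sub1 p) = sub1 p ∧
    (((∀ i j : Fin n, (Sum.inl j : Vn n) ∈ (p i).vars → j ≤ i) ∧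
        (∀ i : Fin n, ∀ m ∈ (p i).support,
          m (Sum.inl i) ≠ 0 → m = Finsupp.single (Sum.inl i) 1)) →
      ((∀ i j : Fin n, j ∈ (sub1 p i).vars → j ≤ i) ∧
        (∀ i : Fin n, ∀ m ∈ (sub1 p i).support,
          m i ≠ 0 → m = Finsupp.single i 1))) := by
  classical
  set PB : Fin n → MvPolynomial (Fin n) B2 := fun j => AB n (p j) with hPB
  have hs_map : ∀ j, map cB (sub1 p j) = PB j := by
    intro j
    rw [sub1_AN, map_cB_absP, congr_mapcB_AN]
  have hfix : ∀ i, bind₁ PB (PB i) = PB i := by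
    intro i
    have hi : absP (bind₁ (Sum.elim p (fun _ => X (Sum.inr ()))) (p i)) = p i :=
      congrFun hidem i
    calc bind₁ PB (PB i)
        = DB PB (p i) := congr_bind_AB PB (p i)
      _ = AB n (bind₁ (Sum.elim p (fun _ => X (Sum.inr ()))) (p i)) :=
          (congr_AB_bind p (p i)).symm
      _ = AB n (absP (bind₁ (Sum.elim p (fun _ => X (Sum.inr ()))) (p i))) :=
          (AB_absP _).symm
      _ = PB i := by rw [hi]
  have part1 : acomp1 (sub1 p) (sub1 p) = sub1 p := by
    funext i
    show absP (bind₁ (sub1 p) (sub1 p i)) = sub1 p i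
    have hmap : map cB (bind₁ (sub1 p) (sub1 p i)) = map cB (sub1 p i) := by
      rw [map_bind₁, hs_map i]
      have hfun : (fun j => map cB (sub1 p j)) = PB := funext hs_map
      rw [hfun, hfix i]
    have hsupp : (bind₁ (sub1 p) (sub1 p i)).support = (sub1 p i).support := by
      rw [← support_map_cB (bind₁ (sub1 p) (sub1 p i)), ← support_map_cB (sub1 p i), hmap]
    calc absP (bind₁ (sub1 p) (sub1 p i)) = absP (sub1 p i) := absP_congr hsupp
      _ = sub1 p i := by rw [sub1_AN, absP_idem]
  refine ⟨part1, ?_⟩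
  rintro ⟨h1, h2⟩
  have hsubsup : ∀ i, (sub1 p i).support ⊆ (p i).support.image rres := by
    intro i
    rw [sub1_AN, support_absP]
    exact support_AN (p i)
  constructor
  · intro i j hj
    rw [mem_vars] at hj
    obtain ⟨d, hd, hjd⟩ := hj
    have hd' := hsubsup i hd
    rw [Finset.mem_image] at hd'
    obtain ⟨m', hm', rfl⟩ := hd'
    apply h1 i j
    rw [mem_vars]
    refine ⟨m', hm', ?_⟩
    rw [Finsupp.mem_support_iff] at hjd ⊢
    rwa [rres_apply] at hjd
  · intro i m hm hmi
    have hd' := hsubsup i hm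
    rw [Finset.mem_image] at hd'
    obtain ⟨m', hm', rfl⟩ := hd'
    rw [rres_apply] at hmi
    have hsingle := h2 i m' hm' hmi
    rw [hsingle, rres_single_inl]
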